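/- For each k with 1 ≤ k ≤ n, the minimum cardinality of sign(L) over all k-dimensional subspaces L of ℝ^n equals 3^k. -/

import Mathlib

open Matrix

noncomputable section

def signVec {n : ℕ} (x : Fin n → ℝ) : Fin n → SignType := fun i => SignType.sign (x i)

def signSet {n : ℕ} (L : Submodule ℝ (Fin n → ℝ)) : Set (Fin n → SignType) :=
  signVec '' (L : Set (Fin n → ℝ))

def IsRationalVec {n : ℕ} (v : Fin n → ℝ) : Prop := ∀ i, ∃ q : ℚ, v i = (q : ℝ)

def IsRationalSubspace {n : ℕ} (K : Submodule ℝ (Fin n → ℝ)) : Prop :=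
  ∃ s : Set (Fin n → ℝ), (∀ v ∈ s, IsRationalVec v) ∧ Submodule.span ℝ s = K

def IsRationalMatrix {m n : ℕ} (B : Matrix (Fin m) (Fin n) ℝ) : Prop :=
  ∀ i j, ∃ q : ℚ, B i j = (q : ℝ)

def mr {m n : ℕ} (A : Matrix (Fin m) (Fin n) SignType) : ℕ :=
  sInf {r | ∃ B : Matrix (Fin m) (Fin n) ℝ, (∀ i j, SignType.sign (B i j) = A i j) ∧ B.rank = r}

def SignPerp {n : ℕ} (c x : Fin n → SignType) : Prop :=
  (∀ i, c i = 0 ∨ x i = 0) ∨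
  (∃ i j, c i = x i ∧ c i ≠ 0 ∧ c j = -(x j) ∧ c j ≠ 0)

lemma sign_coe_real (s : SignType) : SignType.sign ((s : ℝ)) = s := by
  cases s <;> simp [sign_apply]

lemma ncard_range_signfun {n k : ℕ} (F : (Fin k → SignType) → (Fin n → SignType))
    (hF : Function.Injective F) : (Set.range F).ncard = 3 ^ k := by
  rw [← Set.image_univ, Set.ncard_image_of_injective _ hF, Set.ncard_univ,
    Nat.card_eq_fintype_card, Fintype.card_fun]
  have h3 : Fintype.card SignType = 3 := rfl
  rw [h3, Fintype.card_fin]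

/-- extension by zero -/
def extMap (n k : ℕ) : (Fin k → ℝ) →ₗ[ℝ] (Fin n → ℝ) where
  toFun y i := if h : (i : ℕ) < k then y ⟨i, h⟩ else 0
  map_add' y z := by ext i; by_cases h : (i : ℕ) < k <;> simp [h]
  map_smul' c y := by ext i; by_cases h : (i : ℕ) < k <;> simp [h]

lemma extMap_inj (n k : ℕ) (hk : k ≤ n) : Function.Injective (extMap n k) := by
  intro y z h
  ext j
  have := congrFun h ⟨j.1, lt_of_lt_of_le j.2 hk⟩
  simpa [extMap, j.2] using this

/-- The example subspace achieving 3^k. -/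
lemma exists_subspace (n k : ℕ) (hk : k ≤ n) :
    ∃ L : Submodule ℝ (Fin n → ℝ),
      Module.finrank ℝ L = k ∧ (signSet L).ncard = 3 ^ k := by
  refine ⟨LinearMap.range (extMap n k), ?_, ?_⟩
  · rw [LinearMap.finrank_range_of_inj (extMap_inj n k hk)]
    simp
  · set E : (Fin k → SignType) → (Fin n → SignType) :=
      fun s i => if h : (i : ℕ) < k then s ⟨i, h⟩ else 0 with hE
    have hEinj : Function.Injective E := by
      intro s t h
      ext j
      have := congrFun h ⟨j.1, lt_of_lt_of_le j.2 hk⟩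
      simpa [hE, j.2] using this
    have : signSet (LinearMap.range (extMap n k)) = Set.range E := by
      ext σ
      constructor
      · rintro ⟨x, ⟨y, rfl⟩, rfl⟩
        refine ⟨signVec y, ?_⟩
        ext i
        by_cases h : (i : ℕ) < k <;> simp [hE, signVec, extMap, h]
      · rintro ⟨s, rfl⟩
        refine ⟨extMap n k (fun j => ((s j : ℝ))), ⟨_, rfl⟩, ?_⟩
        ext i
        by_cases h : (i : ℕ) < k <;> simp [hE, signVec, extMap, h, sign_coe_real]
    rw [this, ncard_range_signfun E hEinj]

/-- Lower bound. -/
lemma lower_bound {n k : ℕ} (L : Submodule ℝ (Fin n → ℝ))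
    (hL : Module.finrank ℝ L = k) : 3 ^ k ≤ (signSet L).ncard := by
  classical
  set V := ↥L
  haveI : FiniteDimensional ℝ V := FiniteDimensional.finiteDimensional_submodule L
  set φ : Fin n → Module.Dual ℝ V := fun i => (LinearMap.proj i).comp L.subtype with hφ
  -- span of coordinate functionals is all of the dual
  have hspan : Submodule.span ℝ (Set.range φ) = ⊤ := by
    set W := Submodule.span ℝ (Set.range φ)
    have hco : W.dualCoannihilator = ⊥ := by
      rw [eq_bot_iff]
      intro x hx
      rw [Submodule.mem_dualCoannihilator] at hx
      have hx' : ∀ i, φ i x = 0 := fun i =>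
        hx _ (Submodule.subset_span ⟨i, rfl⟩)
      have : (x : Fin n → ℝ) = 0 := by
        ext i; exact hx' i
      simpa [Submodule.mem_bot] using Subtype.ext this
    have hfr := Subspace.finrank_add_finrank_dualCoannihilator_eq W
    rw [hco] at hfr
    simp only [finrank_bot, add_zero] at hfr
    apply Submodule.eq_top_of_finrank_eq
    rw [hfr, Subspace.dual_finrank_eq]
  obtain ⟨t, hts, htspan, htli⟩ := exists_linearIndependent ℝ (Set.range φ)
  rw [hspan] at htspan
  haveI : Fintype t := (htli.setFinite).fintype
  set β0 : Module.Basis t ℝ (Module.Dual ℝ V) :=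
    Module.Basis.mk htli (by rw [Subtype.range_coe, htspan]) with hβ0
  have hcard : Fintype.card t = k := by
    rw [← Module.finrank_eq_card_basis β0, Subspace.dual_finrank_eq, hL]
  set e : t ≃ Fin k := Fintype.equivFinOfCardEq hcard with he
  set β : Module.Basis (Fin k) ℝ (Module.Dual ℝ V) := β0.reindex e with hβ
  have hβmem : ∀ j, β j ∈ Set.range φ := by
    intro j
    have : β j = ((e.symm j : t) : Module.Dual ℝ V) := by
      rw [hβ, Module.Basis.reindex_apply, hβ0, Module.Basis.mk_apply]
    rw [this]
    exact hts (e.symm j).2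
  choose p hp using hβmem
  set b : Module.Basis (Fin k) ℝ V := β.dualBasis.map (Module.evalEquiv ℝ V).symm with hb
  have key : ∀ i j, φ (p j) (b i) = if j = i then 1 else 0 := by
    intro i j
    rw [hp j]
    have hbi : b i = (Module.evalEquiv ℝ V).symm (β.dualBasis i) := by
      rw [hb, Module.Basis.map_apply]
    rw [hbi]
    have : β j ((Module.evalEquiv ℝ V).symm (β.dualBasis i)) =
        (Module.evalEquiv ℝ V) ((Module.evalEquiv ℝ V).symm (β.dualBasis i)) (β j) := rfl
    rw [this, LinearEquiv.apply_symm_apply, Module.Basis.dualBasis_apply_self]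
  -- for each sign pattern, construct a vector
  set x : (Fin k → SignType) → V := fun s => ∑ j, ((s j : ℝ)) • b j with hx
  have hcoord : ∀ s j, ((x s : Fin n → ℝ)) (p j) = (s j : ℝ) := by
    intro s j
    have : ((x s : Fin n → ℝ)) (p j) = φ (p j) (x s) := rfl
    rw [this, hx]
    simp only [map_sum, _root_.map_smul]
    rw [Finset.sum_eq_single j]
    · rw [key j j]; simp
    · intro i _ hij
      rw [key i j]
      simp [Ne.symm hij]
    · simp
  set F : (Fin k → SignType) → (Fin n → SignType) := fun s => signVec ((x s : Fin n → ℝ))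
    with hF
  have hFinj : Function.Injective F := by
    intro s s' h
    ext j
    have h1 := congrFun h (p j)
    simp only [hF, signVec] at h1
    rwa [hcoord, hcoord, sign_coe_real, sign_coe_real] at h1
  have hFrange : Set.range F ⊆ signSet L := by
    rintro σ ⟨s, rfl⟩
    exact ⟨(x s : Fin n → ℝ), (x s).2, rfl⟩
  calc 3 ^ k = (Set.range F).ncard := (ncard_range_signfun F hFinj).symm
    _ ≤ (signSet L).ncard := Set.ncard_le_ncard hFrange (Set.toFinite _)

theorem stmt_14 {n k : ℕ} (hk1 : 1 ≤ k) (hk2 : k ≤ n) :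
    IsLeast {c : ℕ | ∃ L : Submodule ℝ (Fin n → ℝ),
        Module.finrank ℝ L = k ∧ (signSet L).ncard = c} (3 ^ k) := by
  constructor
  · exact exists_subspace n k hk2
  · rintro c ⟨L, hL, rfl⟩
    exact lower_bound L hL
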